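/- For any vectors x, y in ℝ², the inequality |x/⟨x⟩ - y/⟨y⟩| ≥ c·|x - y|/⟨|x|+|y|⟩³ holds for some absolute constant c > 0, where ⟨x⟩ := (1+|x|²)^{1/2}. -/

import Mathlib

open scoped RealInnerProductSpace

noncomputable def jap2 (x : EuclideanSpace ℝ (Fin 2)) : ℝ := Real.sqrt (1 + ‖x‖ ^ 2)

noncomputable def japR (r : ℝ) : ℝ := Real.sqrt (1 + r ^ 2)

set_option maxHeartbeats 1000000 in
/-- Deformation lower bound: `|x/⟨x⟩ - y/⟨y⟩| ≳ |x-y| / ⟨|x|+|y|⟩³`. -/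
theorem stmt0 : ∃ c : ℝ, 0 < c ∧ ∀ x y : EuclideanSpace ℝ (Fin 2),
    ‖(jap2 x)⁻¹ • x - (jap2 y)⁻¹ • y‖ ≥ c * ‖x - y‖ / (japR (‖x‖ + ‖y‖)) ^ 3 := by
  refine ⟨1/2, by norm_num, fun x y => ?_⟩
  set s := ‖x‖ with hs_def
  set t := ‖y‖ with ht_def
  have hs : 0 ≤ s := norm_nonneg x
  have ht : 0 ≤ t := norm_nonneg y
  set a := jap2 x with ha_def
  set b := jap2 y with hb_def
  set g := japR (s + t) with hg_def
  have ha2 : a ^ 2 = 1 + s ^ 2 := Real.sq_sqrt (by positivity)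
  have hb2 : b ^ 2 = 1 + t ^ 2 := Real.sq_sqrt (by positivity)
  have hg2 : g ^ 2 = 1 + (s + t) ^ 2 := Real.sq_sqrt (by positivity)
  have hap : 0 < a := Real.sqrt_pos.mpr (by positivity)
  have hbp : 0 < b := Real.sqrt_pos.mpr (by positivity)
  have hgp : 0 < g := Real.sqrt_pos.mpr (by positivity)
  have hag : a ≤ g := Real.sqrt_le_sqrt (by nlinarith [mul_nonneg hs ht])
  have hbg : b ≤ g := Real.sqrt_le_sqrt (by nlinarith [mul_nonneg hs ht])
  set p := (inner ℝ x y : ℝ) with hp_def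
  clear_value s t a b g p
  have hD2 : ‖x - y‖ ^ 2 = s ^ 2 + t ^ 2 - 2 * p := by
    rw [@norm_sub_sq_real, ← hs_def, ← ht_def, ← hp_def]; ring
  have hst : (s - t) ^ 2 ≤ ‖x - y‖ ^ 2 := by
    have h := abs_norm_sub_norm_le x y
    rw [← hs_def, ← ht_def] at h
    nlinarith [sq_abs (s - t), abs_nonneg (s - t), norm_nonneg (x - y)]
  have hLHSprod : ‖a⁻¹ • x - b⁻¹ • y‖ ^ 2 * (a ^ 2 * b ^ 2)
      = s ^ 2 * b ^ 2 + t ^ 2 * a ^ 2 - 2 * p * (a * b) := by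
    rw [@norm_sub_sq_real, norm_smul, norm_smul, real_inner_smul_left, real_inner_smul_right]
    rw [norm_inv, Real.norm_eq_abs, abs_of_pos hap, norm_inv, Real.norm_eq_abs, abs_of_pos hbp,
      ← hs_def, ← ht_def, ← hp_def]
    field_simp
    ring
  have habsq : (a * b) ^ 2 = (1 + s ^ 2) * (1 + t ^ 2) := by rw [mul_pow, ha2, hb2]
  have hab_lower : 1 + s * t ≤ a * b := by
    nlinarith [sq_nonneg (s - t), mul_pos hap hbp, mul_nonneg hs ht,
      sq_nonneg (a * b - (1 + s * t))]
  have hab_diff : (a - b) * (a + b) = s ^ 2 - t ^ 2 := by linear_combination ha2 - hb2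
  have e2 : (a - b) ^ 2 * (a + b) ^ 2 = (s - t) ^ 2 * (s + t) ^ 2 := by
    calc (a - b) ^ 2 * (a + b) ^ 2 = ((a - b) * (a + b)) ^ 2 := by ring
      _ = (s ^ 2 - t ^ 2) ^ 2 := by rw [hab_diff]
      _ = (s - t) ^ 2 * (s + t) ^ 2 := by ring
  have hN1 : 1 ≤ a * b * (a + b) ^ 2 - (s + t) ^ 2 * (a * b + 1) := by
    have hT : a * b * (a + b) ^ 2 - (s + t) ^ 2 * (a * b + 1)
        = 2 * (a * b + 1) * (a * b - s * t) - s ^ 2 - t ^ 2 := by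
      linear_combination (a * b) * ha2 + (a * b) * hb2
    have hprod : (a * b + s * t) * (a * b - s * t) = 1 + s ^ 2 + t ^ 2 := by
      linear_combination habsq
    have hfin : 2 * (a * b + 1) * (a * b - s * t) - s ^ 2 - t ^ 2
        = (a * b - s * t) ^ 2 + 2 * (a * b - s * t) + 1 := by linear_combination hprod
    rw [hT, hfin]
    nlinarith [hab_lower, sq_nonneg (a * b - s * t)]
  have ekey : ‖a⁻¹ • x - b⁻¹ • y‖ ^ 2 * ((a + b) ^ 2 * (a ^ 2 * b ^ 2))
      = ‖x - y‖ ^ 2 * (a * b) * (a + b) ^ 2 - (s - t) ^ 2 * (s + t) ^ 2 * (a * b + 1) := by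
    calc ‖a⁻¹ • x - b⁻¹ • y‖ ^ 2 * ((a + b) ^ 2 * (a ^ 2 * b ^ 2))
        = (‖a⁻¹ • x - b⁻¹ • y‖ ^ 2 * (a ^ 2 * b ^ 2)) * (a + b) ^ 2 := by ring
      _ = (s ^ 2 * b ^ 2 + t ^ 2 * a ^ 2 - 2 * p * (a * b)) * (a + b) ^ 2 := by rw [hLHSprod]
      _ = ((s ^ 2 + t ^ 2 - 2 * p) * (a * b) - (a - b) ^ 2 * (a * b + 1)) * (a + b) ^ 2 := by
          linear_combination ((a * b - b ^ 2) * (a + b) ^ 2) * ha2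
            + ((a * b - a ^ 2) * (a + b) ^ 2) * hb2
      _ = (s ^ 2 + t ^ 2 - 2 * p) * (a * b) * (a + b) ^ 2
            - (a - b) ^ 2 * (a + b) ^ 2 * (a * b + 1) := by ring
      _ = ‖x - y‖ ^ 2 * (a * b) * (a + b) ^ 2 - (s - t) ^ 2 * (s + t) ^ 2 * (a * b + 1) := by
          rw [← hD2, e2]
  have key : ‖x - y‖ ^ 2 ≤ ‖a⁻¹ • x - b⁻¹ • y‖ ^ 2 * ((a + b) ^ 2 * (a ^ 2 * b ^ 2)) := by
    rw [ekey]
    have t1 : 0 ≤ (‖x - y‖ ^ 2 - (s - t) ^ 2) * ((s + t) ^ 2 * (a * b + 1)) :=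
      mul_nonneg (sub_nonneg.2 hst) (by positivity)
    have t2 : 0 ≤ ‖x - y‖ ^ 2 * (a * b * (a + b) ^ 2 - (s + t) ^ 2 * (a * b + 1) - 1) :=
      mul_nonneg (sq_nonneg _) (by linarith)
    linarith [t1, t2]
  have h1 : a * b ≤ g * g := mul_le_mul hag hbg hbp.le hgp.le
  have h3 : (a + b) ^ 2 ≤ 4 * g ^ 2 := by nlinarith
  have h4 : a ^ 2 * b ^ 2 ≤ g ^ 4 := by nlinarith [mul_pos hap hbp]
  have hMle : (a + b) ^ 2 * (a ^ 2 * b ^ 2) ≤ 4 * g ^ 6 := by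
    have u1 : 0 ≤ (4 * g ^ 2 - (a + b) ^ 2) * (a ^ 2 * b ^ 2) :=
      mul_nonneg (sub_nonneg.2 h3) (by positivity)
    have u2 : 0 ≤ (4 * g ^ 2) * (g ^ 4 - a ^ 2 * b ^ 2) :=
      mul_nonneg (by positivity) (sub_nonneg.2 h4)
    linarith [u1, u2]
  have hfinal : ‖x - y‖ ^ 2 ≤ ‖a⁻¹ • x - b⁻¹ • y‖ ^ 2 * (4 * g ^ 6) :=
    le_trans key (mul_le_mul_of_nonneg_left hMle (sq_nonneg _))
  have h9 : (1 / 2 * ‖x - y‖ / g ^ 3) ^ 2 ≤ ‖a⁻¹ • x - b⁻¹ • y‖ ^ 2 := by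
    have hgs : (0:ℝ) < g ^ 6 := by positivity
    have : (1 / 2 * ‖x - y‖ / g ^ 3) ^ 2 = ‖x - y‖ ^ 2 / (4 * g ^ 6) := by
      rw [div_pow]; ring_nf
    rw [this, div_le_iff₀ (by positivity)]
    linarith [hfinal]
  calc 1 / 2 * ‖x - y‖ / g ^ 3
      = Real.sqrt ((1 / 2 * ‖x - y‖ / g ^ 3) ^ 2) := (Real.sqrt_sq (by positivity)).symm
    _ ≤ Real.sqrt (‖a⁻¹ • x - b⁻¹ • y‖ ^ 2) := Real.sqrt_le_sqrt h9
    _ = ‖a⁻¹ • x - b⁻¹ • y‖ := Real.sqrt_sq (norm_nonneg _)
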